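/- Let P be a parallelogram polyomino with min V(P) = (0,0). Then there exists a unique maximal rectangle R of P with (0,0) ∈ V(R). Moreover, the cell of P with lower-left corner (0,0) belongs to no maximal rectangle of P other than R; in particular R contains a single rectangle. -/
import Mathlib


open scoped Classical

/-- Lattice points of `ℕ²`; a cell is identified with its lower-left corner. -/
abbrev Pt : Type := ℕ × ℕ

/-- The four vertices (corners) of the unit cell with lower-left corner `a`. -/
def cellVerts (a : Pt) : Finset Pt :=
  {a, (a.1 + 1, a.2), (a.1, a.2 + 1), (a.1 + 1, a.2 + 1)}

/-- The vertex set `V(P)` of a collection of cells. -/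
def vertexSet (P : Finset Pt) : Finset Pt := P.biUnion cellVerts

/-- Two cells share an edge. -/
def cellAdj (a b : Pt) : Prop :=
  (a.1 = b.1 ∧ (a.2 = b.2 + 1 ∨ b.2 = a.2 + 1)) ∨
  (a.2 = b.2 ∧ (a.1 = b.1 + 1 ∨ b.1 = a.1 + 1))

/-- Any two cells of `S` are joined by a sequence of edge-adjacent cells of `S`. -/
def CellConnected (S : Set Pt) : Prop :=
  ∀ a ∈ S, ∀ b ∈ S,
    Relation.ReflTransGen (fun x y => cellAdj x y ∧ x ∈ S ∧ y ∈ S) a b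

/-- A polyomino: a nonempty, edge-connected finite collection of cells. -/
def IsPolyomino (P : Finset Pt) : Prop :=
  P.Nonempty ∧ CellConnected (↑P : Set Pt)

/-- A simple polyomino: the cells of `ℕ²` outside of `P` are also edge-connected. -/
def IsSimplePolyomino (P : Finset Pt) : Prop :=
  IsPolyomino P ∧ CellConnected ((↑P : Set Pt)ᶜ)

/-- The cells of the interval `[a, b]` of `ℕ²`. -/
def intervalCells (a b : Pt) : Finset Pt :=
  Finset.Ico a.1 b.1 ×ˢ Finset.Ico a.2 b.2

/-- `[a, b]` is a proper interval all of whose cells belong to `P`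
(an inner interval, also called a rectangle of `P`). -/
def IsInnerInterval (P : Finset Pt) (a b : Pt) : Prop :=
  a.1 < b.1 ∧ a.2 < b.2 ∧ intervalCells a b ⊆ P

/-- The ideal of inner 2-minors of a collection of cells `P`, in the polynomial
ring whose variables are indexed by a finite vertex set `V`. -/
noncomputable def innerMinorIdeal (K : Type*) [Field K] (V P : Finset Pt) :
    Ideal (MvPolynomial {v : Pt // v ∈ V} K) :=
  Ideal.span { f | ∃ a b c d : {v : Pt // v ∈ V},
    IsInnerInterval P a.1 b.1 ∧
    c.1 = ((a.1).1, (b.1).2) ∧ d.1 = ((b.1).1, (a.1).2) ∧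
    f = MvPolynomial.X a * MvPolynomial.X b - MvPolynomial.X c * MvPolynomial.X d }

/-- The polyomino ideal `I_P ⊆ K[x_v : v ∈ V(P)]`. -/
noncomputable def polyoIdeal (K : Type*) [Field K] (P : Finset Pt) :
    Ideal (MvPolynomial {v : Pt // v ∈ vertexSet P} K) :=
  innerMinorIdeal K (vertexSet P) P

/-- The join-meet ideal of a finite sublattice `L` of `ℕ²`. -/
noncomputable def joinMeetIdeal (K : Type*) [Field K] (L : Finset Pt) :
    Ideal (MvPolynomial {v : Pt // v ∈ L} K) :=
  Ideal.span { f | ∃ a b c d : {v : Pt // v ∈ L},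
    ¬ a.1 ≤ b.1 ∧ ¬ b.1 ≤ a.1 ∧ c.1 = a.1 ⊔ b.1 ∧ d.1 = a.1 ⊓ b.1 ∧
    f = MvPolynomial.X a * MvPolynomial.X b - MvPolynomial.X c * MvPolynomial.X d }

/-- A saturated chain in `L` from `a` to `b` whose consecutive elements differ by
`(1,0)` or `(0,1)`. -/
def UnitChain (L : Finset Pt) (a b : Pt) : Prop :=
  ∃ (k : ℕ) (c : ℕ → Pt), c 0 = a ∧ c k = b ∧ (∀ i ≤ k, c i ∈ L) ∧
    ∀ i < k, c (i + 1) = c i + (1, 0) ∨ c (i + 1) = c i + (0, 1)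

/-- The rank of a finite sublattice of `ℕ²` (whose minimum is `(0,0)`). -/
def latRank (L : Finset Pt) : ℕ := L.sup fun a => a.1 + a.2

/-- A simple planar distributive lattice: a finite sublattice of `ℕ²` containing
`(0,0)`, in which any two comparable elements are joined by a saturated chain of unit
steps, and having at least two elements in each intermediate rank. -/
def IsSPDL (L : Finset Pt) : Prop :=
  (0, 0) ∈ L ∧
  (∀ a ∈ L, ∀ b ∈ L, a ⊔ b ∈ L ∧ a ⊓ b ∈ L) ∧
  (∀ a ∈ L, ∀ b ∈ L, a ≤ b → UnitChain L a b) ∧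
  ∀ r : ℕ, 0 < r → r < latRank L → 2 ≤ (L.filter fun a => a.1 + a.2 = r).card

/-- The cells all of whose four vertices lie in `L`. -/
def cellsOf (L : Finset Pt) : Finset Pt := L.filter fun a => cellVerts a ⊆ L

/-- A north-east lattice path of length `k` starting at the origin. -/
def IsNEPath (k : ℕ) (f : ℕ → Pt) : Prop :=
  f 0 = (0, 0) ∧ ∀ i < k, f (i + 1) = f i + (1, 0) ∨ f (i + 1) = f i + (0, 1)

/-- `P` is the parallelogram polyomino bounded above by the path `u` and below by
the path `l`, both of length `k`, meeting only at their endpoints. -/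
def ParaData (P : Finset Pt) (k : ℕ) (u l : ℕ → Pt) : Prop :=
  0 < k ∧ IsNEPath k u ∧ IsNEPath k l ∧ u k = l k ∧
  (∀ i ≤ k, (u i).1 ≤ (l i).1) ∧
  (∀ i, 0 < i → i < k → u i ≠ l i) ∧
  P.Nonempty ∧
  ∀ c : Pt, c ∈ P ↔
    ∀ v ∈ cellVerts c, v.1 + v.2 ≤ k ∧ (u (v.1 + v.2)).1 ≤ v.1 ∧ v.1 ≤ (l (v.1 + v.2)).1

/-- A parallelogram polyomino. -/
def IsParaPoly (P : Finset Pt) : Prop := ∃ k u l, ParaData P k u l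

/-- `F` is a set of non-attacking rooks on `P`. -/
def NonAttacking (P : Finset Pt) (F : Finset Pt) : Prop :=
  F ⊆ P ∧ ∀ a ∈ F, ∀ b ∈ F, a ≠ b → a.1 ≠ b.1 ∧ a.2 ≠ b.2

/-- A switch: inside a rectangle `[a,b]` of `P`, replace the diagonal pair of cells by
the antidiagonal pair, or vice versa. -/
def SwitchStep (P : Finset Pt) (F G : Finset Pt) : Prop :=
  ∃ a b : Pt, IsInnerInterval P a b ∧
    ((a ∈ F ∧ (b.1 - 1, b.2 - 1) ∈ F ∧
       G = F \ {a, (b.1 - 1, b.2 - 1)} ∪ {(a.1, b.2 - 1), (b.1 - 1, a.2)}) ∨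
     ((a.1, b.2 - 1) ∈ F ∧ (b.1 - 1, a.2) ∈ F ∧
       G = F \ {(a.1, b.2 - 1), (b.1 - 1, a.2)} ∪ {a, (b.1 - 1, b.2 - 1)}))

/-- The number `|R̃_k|` of equivalence classes (under finitely many switches) of sets of
`k` non-attacking rooks on `P`. -/
noncomputable def rtilde (P : Finset Pt) (k : ℕ) : ℕ :=
  Nat.card (Quot fun F G : {F : Finset Pt // NonAttacking P F ∧ F.card = k} =>
    SwitchStep P F.1 G.1)

/-- The rook number `r(P)`: the maximum number of non-attacking rooks on `P`. -/
noncomputable def rookNum (P : Finset Pt) : ℕ :=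
  (P.powerset.filter fun F => NonAttacking P F).sup Finset.card

/-- The Hilbert function of `K[P] = K[x_v : v ∈ V(P)]/I_P`. -/
noncomputable def hilbertFn (K : Type*) [Field K] (P : Finset Pt) (k : ℕ) : ℕ :=
  Module.finrank K
    ↥(Submodule.map (Ideal.Quotient.mkₐ K (polyoIdeal K P)).toLinearMap
      (MvPolynomial.homogeneousSubmodule {v : Pt // v ∈ vertexSet P} K k))

/-- The Hilbert–Poincaré series of `K[P]`, as a formal power series over `ℤ`. -/
noncomputable def hilbertSeries (K : Type*) [Field K] (P : Finset Pt) : PowerSeries ℤ :=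
  PowerSeries.mk fun k => (hilbertFn K P k : ℤ)

/-- `[a,b]` is a maximal rectangle of `P`. -/
def MaximalRect (P : Finset Pt) (a b : Pt) : Prop :=
  IsInnerInterval P a b ∧
  ∀ a' b', IsInnerInterval P a' b' → a' ≤ a → b ≤ b' → a' = a ∧ b' = b

/-- The rectangle `[sa,sb]` of `P` is a single rectangle whose unique maximal rectangle
is `[ra,rb]`: it is contained in `[ra,rb]` and shares no cell with any other maximal
rectangle of `P`. -/
def SingleRectOf (P : Finset Pt) (ra rb sa sb : Pt) : Prop :=
  IsInnerInterval P sa sb ∧ ra ≤ sa ∧ sb ≤ rb ∧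
  ∀ ra' rb', MaximalRect P ra' rb' → ¬(ra' = ra ∧ rb' = rb) →
    ∀ c ∈ intervalCells sa sb, c ∉ intervalCells ra' rb'

/-- `P` has the S-property: every maximal rectangle of `P` has a unique single square. -/
def HasSProperty (P : Finset Pt) : Prop :=
  ∀ ra rb, MaximalRect P ra rb →
    ∃! s : Pt × Pt,
      SingleRectOf P ra rb s.1 s.2 ∧ s.2.1 - s.1.1 = s.2.2 - s.1.2

/-- `P` is shortenable: removing the unique maximal rectangle `R₀` containing `(0,0)`
leaves (up to translation) a parallelogram polyomino. -/
def Shortenable (P : Finset Pt) : Prop :=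
  ∃ b₀, MaximalRect P (0, 0) b₀ ∧
    ∃ (w : Pt) (Q : Finset Pt), IsParaPoly Q ∧
      P \ intervalCells (0, 0) b₀ = Q.image fun c => c + w

/-- `P` is well-shortenable: it is shortenable, and `P ∖ R₀` is (up to translation)
either a rectangle or again a well-shortenable parallelogram polyomino. -/
inductive WellShortenable : Finset Pt → Prop
  | base (P : Finset Pt) (b₀ : Pt) (hmax : MaximalRect P (0, 0) b₀)
      (w : Pt) (Q : Finset Pt) (hQ : IsParaPoly Q)
      (heq : P \ intervalCells (0, 0) b₀ = Q.image fun c => c + w)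
      (hrect : ∃ a b : Pt, Q = intervalCells a b) : WellShortenable P
  | step (P : Finset Pt) (b₀ : Pt) (hmax : MaximalRect P (0, 0) b₀)
      (w : Pt) (Q : Finset Pt) (hQ : IsParaPoly Q)
      (heq : P \ intervalCells (0, 0) b₀ = Q.image fun c => c + w)
      (hws : WellShortenable Q) : WellShortenable P

/-- `a` is a join-irreducible element of the finite lattice `L ⊆ ℕ²`
(whose minimum is `(0,0)`). -/
def JoinIrred (L : Finset Pt) (a : Pt) : Prop :=
  a ∈ L ∧ a ≠ (0, 0) ∧ ∀ b ∈ L, ∀ c ∈ L, a = b ⊔ c → a = b ∨ a = c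

/-- `c` is a maximal chain of the subposet `J` of `ℕ²`. -/
def MaxChainIn (J : Set Pt) (c : Set Pt) : Prop :=
  c ⊆ J ∧ IsChain (· ≤ ·) c ∧
  ∀ c', c' ⊆ J → IsChain (· ≤ ·) c' → c ⊆ c' → c = c'

/-- The subposet `J` of `ℕ²` is pure: all its maximal chains have the same length. -/
def PurePoset (J : Set Pt) : Prop :=
  ∀ c₁ c₂, MaxChainIn J c₁ → MaxChainIn J c₂ → c₁.ncard = c₂.ncard

/-- A maximal chain of a simple planar distributive lattice `L`, viewed as a monotone
lattice path of unit steps from `(0,0)` to `max L`. -/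
def IsMaxLatticeChain (L : Finset Pt) (N : ℕ) (c : ℕ → Pt) : Prop :=
  c 0 = (0, 0) ∧ (∀ i ≤ N, c i ∈ L) ∧ (∀ a ∈ L, a ≤ c N) ∧
  ∀ i < N, c (i + 1) = c i + (1, 0) ∨ c (i + 1) = c i + (0, 1)

/-- The chain `c` has a descent at the cell with lower-left corner `a`. -/
def DescentCell (L : Finset Pt) (N : ℕ) (c : ℕ → Pt) (a : Pt) : Prop :=
  cellVerts a ⊆ L ∧
  ∃ s, s + 2 ≤ N ∧ c s = a ∧ c (s + 1) = (a.1 + 1, a.2) ∧ c (s + 2) = (a.1 + 1, a.2 + 1)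

/-- The `i`-th step of the path `f` is a north step. -/
def NorthStep (f : ℕ → Pt) (i : ℕ) : Prop := f (i + 1) = f i + (0, 1)

/-- The `i`-th step of the path `f` is an east step. -/
def EastStep (f : ℕ → Pt) (i : ℕ) : Prop := f (i + 1) = f i + (1, 0)

/-- `[i, i+c)` is a maximal run of steps satisfying `Q` in a path of length `k`. -/
def MaxRun (Q : ℕ → Prop) (k i c : ℕ) : Prop :=
  0 < c ∧ i + c ≤ k ∧ (∀ j, i ≤ j → j < i + c → Q j) ∧
  (i = 0 ∨ ¬ Q (i - 1)) ∧ (i + c = k ∨ ¬ Q (i + c))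

/-- The `i`-th step of the 2-colored Motzkin path associated to the pair of paths
`(u, l)` is a rise step. -/
def RiseStep (u l : ℕ → Pt) (i : ℕ) : Prop := NorthStep u i ∧ EastStep l i

/-- Fall step of the associated 2-colored Motzkin path. -/
def FallStep (u l : ℕ → Pt) (i : ℕ) : Prop := EastStep u i ∧ NorthStep l i

/-- `α`-colored horizontal step of the associated 2-colored Motzkin path. -/
def AlphaStep (u l : ℕ → Pt) (i : ℕ) : Prop := NorthStep u i ∧ NorthStep l i

/-- `β`-colored horizontal step of the associated 2-colored Motzkin path. -/
def BetaStep (u l : ℕ → Pt) (i : ℕ) : Prop := EastStep u i ∧ EastStep l i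

/-- Row convexity of a collection of cells. -/
def RowConvex (P : Finset Pt) : Prop :=
  ∀ i j k : ℕ, (i, j) ∈ P → (k, j) ∈ P → ∀ l, i ≤ l → l ≤ k → (l, j) ∈ P

/-- Column convexity of a collection of cells. -/
def ColConvex (P : Finset Pt) : Prop :=
  ∀ i j k : ℕ, (i, j) ∈ P → (i, k) ∈ P → ∀ l, j ≤ l → l ≤ k → (i, l) ∈ P

/-- `{(r,j),(r+1,j)}` is a horizontal edge of a cell of `P`. -/
def HEdge (P : Finset Pt) (r j : ℕ) : Prop :=
  (r, j) ∈ P ∨ (0 < j ∧ (r, j - 1) ∈ P)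

/-- `{(i,r),(i,r+1)}` is a vertical edge of a cell of `P`. -/
def VEdge (P : Finset Pt) (i r : ℕ) : Prop :=
  (i, r) ∈ P ∨ (0 < i ∧ (i - 1, r) ∈ P)

/-- `[(i,j),(k,j)]` is a maximal horizontal edge interval of `P`. -/
def MaxHInterval (P : Finset Pt) (i k j : ℕ) : Prop :=
  i < k ∧ (∀ r, i ≤ r → r < k → HEdge P r j) ∧
  ∀ i' k', i' < k' → (∀ r, i' ≤ r → r < k' → HEdge P r j) → i' ≤ i → k ≤ k' →
    i' = i ∧ k' = k

/-- `[(i,j),(i,l)]` is a maximal vertical edge interval of `P`. -/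
def MaxVInterval (P : Finset Pt) (i j l : ℕ) : Prop :=
  j < l ∧ (∀ r, j ≤ r → r < l → VEdge P i r) ∧
  ∀ j' l', j' < l' → (∀ r, j' ≤ r → r < l' → VEdge P i r) → j' ≤ j → l ≤ l' →
    j' = j ∧ l' = l

/-- The minima of the maximal horizontal edge intervals of `P`. -/
def HMins (P : Finset Pt) : Set Pt := {a | ∃ k, MaxHInterval P a.1 k a.2}

/-- The minima of the maximal vertical edge intervals of `P`. -/
def VMins (P : Finset Pt) : Set Pt := {a | ∃ l, MaxVInterval P a.1 a.2 l}

lemma nep_bounds {k : ℕ} {f : ℕ → Pt} (h : IsNEPath k f) :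
    ∀ j ≤ k, ∀ i ≤ j, (f i).1 ≤ (f j).1 ∧ (f j).1 ≤ (f i).1 + (j - i) := by
  intro j
  induction j with
  | zero =>
    intro _ i hi
    have : i = 0 := by omega
    subst this; exact ⟨le_rfl, by omega⟩
  | succ n ih =>
    intro hnk i hin
    rcases Nat.lt_or_ge i (n + 1) with h' | h'
    · have hi := ih (by omega) i (by omega)
      rcases h.2 n (by omega) with hs | hs <;>
        · rw [hs]; simp only [Prod.fst_add]; omega
    · have hi : i = n + 1 := by omega
      subst hi; exact ⟨le_rfl, by omega⟩

-- STATEMENT 8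
theorem stmt8 (P : Finset Pt) (hP : IsParaPoly P) :
    ∃ b₀ : Pt, MaximalRect P (0, 0) b₀ ∧
      (∀ a b : Pt, MaximalRect P a b → (0, 0) ∈ Set.Icc a b → a = (0, 0) ∧ b = b₀) ∧
      (∀ a b : Pt, MaximalRect P a b → (0, 0) ∈ intervalCells a b →
        a = (0, 0) ∧ b = b₀) ∧
      ∃ sa sb : Pt, SingleRectOf P (0, 0) b₀ sa sb := by
  obtain ⟨k, u, l, hk, hu, hl, hend, hle, hne, hPne, hmem⟩ := hP
  have hmem' : ∀ x y : ℕ, (x, y) ∈ P ↔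
      (x + y ≤ k ∧ (u (x + y)).1 ≤ x ∧ x ≤ (l (x + y)).1) ∧
      (x + 1 + y ≤ k ∧ (u (x + 1 + y)).1 ≤ x + 1 ∧ x + 1 ≤ (l (x + 1 + y)).1) ∧
      (x + (y + 1) ≤ k ∧ (u (x + (y + 1))).1 ≤ x ∧ x ≤ (l (x + (y + 1))).1) ∧
      (x + 1 + (y + 1) ≤ k ∧ (u (x + 1 + (y + 1))).1 ≤ x + 1 ∧
        x + 1 ≤ (l (x + 1 + (y + 1))).1) := by
    intro x y
    rw [hmem (x, y)]
    simp only [cellVerts, Finset.mem_insert, Finset.mem_singleton, forall_eq_or_imp, forall_eq]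
  have hk2 : 2 ≤ k := by
    obtain ⟨c, hc⟩ := hPne
    have h := (hmem' c.1 c.2).1 (by rwa [Prod.mk.eta])
    have := h.2.2.2.1
    omega
  have h01 : (u 1).1 = 0 ∧ (l 1).1 = 1 := by
    have hne1 : u 1 ≠ l 1 := hne 1 one_pos (by omega)
    have hle1 : (u 1).1 ≤ (l 1).1 := hle 1 (by omega)
    rcases hu.2 0 (by omega) with h1 | h1 <;> rcases hl.2 0 (by omega) with h2 | h2 <;>
      rw [hu.1] at h1 <;> rw [hl.1] at h2 <;> rw [h1, h2] at hne1 hle1 ⊢ <;> simp_all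
  have hu0 : (u 0).1 = 0 := by rw [hu.1]
  have hl0 : (l 0).1 = 0 := by rw [hl.1]
  have hOP : (0, 0) ∈ P := by
    have hu2 := (nep_bounds hu 2 hk2 1 (by omega)).2
    have hl2 := (nep_bounds hl 2 hk2 1 (by omega)).1
    rw [hmem' 0 0]
    norm_num
    omega
  have key : ∀ i j i' j' x y : ℕ, (i, j) ∈ P → (i', j') ∈ P →
      i ≤ x → x ≤ i' → j' ≤ y → y ≤ j → (x, y) ∈ P := by
    intro i j i' j' x y hA hB hix hxi' hj'y hyj
    rw [hmem'] at hA hB ⊢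
    have hA2 : (u (i + (j + 1))).1 ≤ i := hA.2.2.1.2.1
    have hAk : i + (j + 1) ≤ k := hA.2.2.1.1
    have hB2 : i' + 1 ≤ (l (i' + 1 + j')).1 := hB.2.1.2.2
    have hBk : i' + 1 + j' ≤ k := hB.2.1.1
    have e1 : (l (i' + 1 + j')).1 ≤ (l k).1 := (nep_bounds hl k le_rfl _ hBk).1
    have e2 : (u k).1 ≤ (u (i + (j + 1))).1 + (k - (i + (j + 1))) :=
      (nep_bounds hu k le_rfl _ hAk).2
    have e3 : (u k).1 = (l k).1 := by rw [hend]
    have hkb : i' + j + 2 ≤ k := by omega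
    have huC : ∀ s c : ℕ, s ≤ i' + j + 2 → i ≤ c → s ≤ c + j + 1 → (u s).1 ≤ c := by
      intro s c hs hic hscj
      rcases le_or_gt s (i + (j + 1)) with h | h
      · have := (nep_bounds hu (i + (j + 1)) hAk s h).1
        omega
      · have := (nep_bounds hu s (by omega) (i + (j + 1)) h.le).2
        omega
    have hlC : ∀ s c : ℕ, s ≤ i' + j + 2 → c ≤ i' + 1 → c + j' ≤ s → c ≤ (l s).1 := by
      intro s c hs hci hcj
      rcases le_or_gt (i' + 1 + j') s with h | h
      · have := (nep_bounds hl s (by omega) (i' + 1 + j') h).1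
        omega
      · have := (nep_bounds hl (i' + 1 + j') hBk s h.le).2
        omega
    exact ⟨⟨by omega, huC _ _ (by omega) (by omega) (by omega),
        hlC _ _ (by omega) (by omega) (by omega)⟩,
      ⟨by omega, huC _ _ (by omega) (by omega) (by omega),
        hlC _ _ (by omega) (by omega) (by omega)⟩,
      ⟨by omega, huC _ _ (by omega) (by omega) (by omega),
        hlC _ _ (by omega) (by omega) (by omega)⟩,
      ⟨by omega, huC _ _ (by omega) (by omega) (by omega),
        hlC _ _ (by omega) (by omega) (by omega)⟩⟩
  set x₀ := Nat.findGreatest (fun x => (x, 0) ∈ P) (P.sup Prod.fst) with hx₀def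
  set y₀ := Nat.findGreatest (fun y => (0, y) ∈ P) (P.sup Prod.snd) with hy₀def
  have hx₀P : (x₀, 0) ∈ P :=
    Nat.findGreatest_spec (P := fun x => (x, 0) ∈ P) (Nat.zero_le _) hOP
  have hy₀P : (0, y₀) ∈ P :=
    Nat.findGreatest_spec (P := fun y => (0, y) ∈ P) (Nat.zero_le _) hOP
  have hx₀max : ∀ x, (x, 0) ∈ P → x ≤ x₀ := fun x h =>
    Nat.le_findGreatest (P := fun x => (x, 0) ∈ P) (Finset.le_sup (f := Prod.fst) h) h
  have hy₀max : ∀ y, (0, y) ∈ P → y ≤ y₀ := fun y h =>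
    Nat.le_findGreatest (P := fun y => (0, y) ∈ P) (Finset.le_sup (f := Prod.snd) h) h
  have hinner : IsInnerInterval P (0, 0) (x₀ + 1, y₀ + 1) := by
    refine ⟨Nat.succ_pos _, Nat.succ_pos _, ?_⟩
    intro c hc
    simp only [intervalCells, Finset.mem_product, Finset.mem_Ico] at hc
    have h := key 0 y₀ x₀ 0 c.1 c.2 hy₀P hx₀P (by omega) (by omega) (by omega) (by omega)
    rwa [Prod.mk.eta] at h
  have hcells : ∀ b : Pt, IsInnerInterval P (0, 0) b → b ≤ (x₀ + 1, y₀ + 1) := by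
    intro b hb
    obtain ⟨hb1, hb2, hbsub⟩ := hb
    have h1 : (b.1 - 1, 0) ∈ P := hbsub (by
      simp only [intervalCells, Finset.mem_product, Finset.mem_Ico]
      simp only [Prod.fst, Prod.snd] at hb1 hb2 ⊢
      omega)
    have h2 : (0, b.2 - 1) ∈ P := hbsub (by
      simp only [intervalCells, Finset.mem_product, Finset.mem_Ico]
      simp only [Prod.fst, Prod.snd] at hb1 hb2 ⊢
      omega)
    have hx := hx₀max _ h1
    have hy := hy₀max _ h2
    simp only [Prod.fst, Prod.snd] at hb1 hb2
    exact Prod.le_def.mpr ⟨by omega, by omega⟩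
  have hmaxR : MaximalRect P (0, 0) (x₀ + 1, y₀ + 1) := by
    refine ⟨hinner, ?_⟩
    intro a' b' hI ha' hb'
    have ha0 : a' = (0, 0) :=
      le_antisymm ha' (Prod.le_def.mpr ⟨Nat.zero_le _, Nat.zero_le _⟩)
    have hb0 := hcells b' (ha0 ▸ hI)
    exact ⟨ha0, le_antisymm hb0 hb'⟩
  have hIcc : ∀ a b : Pt, MaximalRect P a b → (0, 0) ∈ Set.Icc a b →
      a = (0, 0) ∧ b = (x₀ + 1, y₀ + 1) := by
    intro a b hM hm
    obtain ⟨hin, hmax⟩ := hM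
    rw [Set.mem_Icc] at hm
    have ha : a = (0, 0) :=
      le_antisymm hm.1 (Prod.le_def.mpr ⟨Nat.zero_le _, Nat.zero_le _⟩)
    subst ha
    obtain ⟨h1, h2⟩ := hmax (0, 0) (x₀ + 1, y₀ + 1) hinner le_rfl (hcells b hin)
    exact ⟨rfl, h2.symm⟩
  have hCell : ∀ a b : Pt, MaximalRect P a b → (0, 0) ∈ intervalCells a b →
      a = (0, 0) ∧ b = (x₀ + 1, y₀ + 1) := by
    intro a b hM hm
    apply hIcc a b hM
    simp only [intervalCells, Finset.mem_product, Finset.mem_Ico] at hm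
    rw [Set.mem_Icc]
    exact ⟨Prod.le_def.mpr ⟨hm.1.1, hm.2.1⟩,
      Prod.le_def.mpr ⟨Nat.zero_le _, Nat.zero_le _⟩⟩
  refine ⟨(x₀ + 1, y₀ + 1), hmaxR, hIcc, hCell, (0, 0), (1, 1), ?_⟩
  refine ⟨⟨one_pos, one_pos, ?_⟩, le_rfl,
    Prod.le_def.mpr ⟨Nat.le_add_left _ _, Nat.le_add_left _ _⟩, ?_⟩
  · intro c hc
    simp only [intervalCells, Finset.mem_product, Finset.mem_Ico] at hc
    have hc0 : c = (0, 0) := by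
      have := hc.1.2
      have := hc.2.2
      ext <;> omega
    rwa [hc0]
  · intro ra' rb' hM hne' c hc hc'
    simp only [intervalCells, Finset.mem_product, Finset.mem_Ico] at hc
    have hc0 : c = (0, 0) := by
      have := hc.1.2
      have := hc.2.2
      ext <;> omega
    exact hne' (hCell ra' rb' hM (hc0 ▸ hc'))
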